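/- Let Φ be a ν-self-concordant barrier on the unit ball of ℓ_p^n with p > 2, let X₀ = 0 and X_i = X_{i-1} + (1/(2n^{1/p})) ξ_i e_i with ξ_i i.i.d. Rademacher. Then E[Φ(X_n)] − Φ(0) ≥ n · min(1/(64 n^{2/p}), 1/16), and consequently ν = Ω(n^{1−2/p}). -/

import Mathlib

open Matrix

/-- The ℓ_p norm of a vector in ℝ^n. -/
noncomputable def pnorm {n : ℕ} (p : ℝ) (v : Fin n → ℝ) : ℝ :=
  (∑ i, |v i| ^ p) ^ (1 / p)

/-- The endpoint of the random walk with signs `ξ` and step size `1/(2 n^{1/p})`. -/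
noncomputable def walkEnd (n : ℕ) (p : ℝ) (ξ : Fin n → Bool) : Fin n → ℝ :=
  fun i => (if ξ i then (1 : ℝ) else -1) / (2 * (n : ℝ) ^ (1 / p : ℝ))

noncomputable def stepC (n : ℕ) (p : ℝ) : ℝ := 1 / (2 * (n : ℝ) ^ (1 / p : ℝ))

noncomputable def sgn (b : Bool) : ℝ := if b then 1 else -1

noncomputable def walkW (n : ℕ) (p : ℝ) (k : ℕ) (ξ : Fin n → Bool) : Fin n → ℝ :=
  fun i => if (i : ℕ) < k then sgn (ξ i) * stepC n p else 0

lemma stepC_pos {n : ℕ} (hn : 1 ≤ n) {p : ℝ} (_hp : 0 < p) : 0 < stepC n p := by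
  have hn0 : (0:ℝ) < n := by exact_mod_cast hn
  unfold stepC; positivity

lemma stepC_rpow {n : ℕ} (hn : 1 ≤ n) {p : ℝ} (hp : 0 < p) :
    stepC n p ^ p = 1 / (2 ^ p * n) := by
  have hn0 : (0:ℝ) < n := by exact_mod_cast hn
  have h1 : ((n:ℝ) ^ (1/p : ℝ)) ^ p = (n:ℝ) := by
    rw [← Real.rpow_mul hn0.le, one_div_mul_cancel hp.ne', Real.rpow_one]
  unfold stepC
  rw [Real.div_rpow zero_le_one (by positivity), Real.one_rpow,
    Real.mul_rpow (by norm_num) (by positivity), h1]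

lemma pnorm_le_half {n : ℕ} (hn : 1 ≤ n) {p : ℝ} (hp : 0 < p) (v : Fin n → ℝ)
    (hv : ∀ i, |v i| ≤ stepC n p) : pnorm p v ≤ 1 / 2 := by
  have hn0 : (0:ℝ) < n := by exact_mod_cast hn
  have hsum : ∑ i, |v i| ^ p ≤ (1/2 : ℝ) ^ p := by
    calc ∑ i, |v i| ^ p ≤ ∑ _i : Fin n, stepC n p ^ p :=
          Finset.sum_le_sum fun i _ => Real.rpow_le_rpow (abs_nonneg _) (hv i) hp.le
      _ = n * (1 / (2 ^ p * n)) := by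
          rw [Finset.sum_const, Finset.card_univ, Fintype.card_fin, nsmul_eq_mul,
            stepC_rpow hn hp]
      _ = 1 / 2 ^ p := by field_simp
      _ = (1/2 : ℝ) ^ p := by
          rw [Real.div_rpow zero_le_one (by norm_num), Real.one_rpow]
  have h0 : 0 ≤ ∑ i, |v i| ^ p := Finset.sum_nonneg fun i _ => Real.rpow_nonneg (abs_nonneg _) _
  have := Real.rpow_le_rpow h0 hsum (by positivity : (0:ℝ) ≤ 1/p)
  rwa [← Real.rpow_mul (by norm_num : (0:ℝ) ≤ 1/2), mul_one_div_cancel hp.ne',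
    Real.rpow_one] at this

lemma pnorm_walkW_le {n : ℕ} (hn : 1 ≤ n) {p : ℝ} (hp : 0 < p) (k : ℕ) (ξ : Fin n → Bool) :
    pnorm p (walkW n p k ξ) ≤ 1 / 2 := by
  apply pnorm_le_half hn hp
  intro i
  unfold walkW
  have hc := stepC_pos hn hp
  by_cases h : (i : ℕ) < k <;> simp [h, sgn, abs_of_pos hc, hc.le]
  cases ξ i <;> simp [abs_of_pos hc, hc.le, abs_of_neg, neg_mul, one_mul]

lemma walkW_n_eq {n : ℕ} (p : ℝ) (ξ : Fin n → Bool) : walkW n p n ξ = walkEnd n p ξ := by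
  funext i
  simp only [walkW, walkEnd, i.isLt, if_true, sgn]
  rw [div_eq_mul_one_div]
  rfl

set_option maxHeartbeats 1000000 in
theorem barrier_lower_bound_random_walk {n : ℕ} (hn : 1 ≤ n) (p : ℝ) (hp : 2 < p)
    (ν : ℝ) (hν : 0 ≤ ν)
    (Φ : (Fin n → ℝ) → ℝ) (gΦ : (Fin n → ℝ) → (Fin n → ℝ))
    (H : (Fin n → ℝ) → Matrix (Fin n) (Fin n) ℝ)
    -- Bregman divergence lower bound (Theorem parts 2,3 of the cited facts)
    (hBreg : ∀ x h : Fin n → ℝ, pnorm p x < 1 →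
      Φ (x + h) - Φ x - gΦ x ⬝ᵥ h
        ≥ min ((1 / 4) * (h ⬝ᵥ (H x).mulVec h)) (1 / 16))
    -- Dikin ellipse property: the open unit Dikin ellipse lies in the ℓ_p ball
    (hDikin : ∀ x h : Fin n → ℝ, pnorm p x < 1 →
      Real.sqrt (h ⬝ᵥ (H x).mulVec h) < 1 → pnorm p (x + h) ≤ 1)
    -- ν-self-concordance bound via the Minkowski gauge from the origin
    (hNu : ∀ y : Fin n → ℝ, pnorm p y ≤ 1 / 2 → Φ y - Φ 0 ≤ ν * Real.log 2) :
    ((1 / 2 ^ n) * ∑ ξ : Fin n → Bool, Φ (walkEnd n p ξ)) - Φ 0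
        ≥ n * min (1 / (64 * (n : ℝ) ^ (2 / p : ℝ))) (1 / 16) ∧
      ν ≥ (n : ℝ) ^ (1 - 2 / p : ℝ) / (64 * Real.log 2) := by
  have hp0 : 0 < p := by linarith
  have hn0 : (0:ℝ) < n := by exact_mod_cast hn
  have hc : 0 < stepC n p := stepC_pos hn hp0
  have hA : (0:ℝ) < (n:ℝ) ^ (2/p : ℝ) := Real.rpow_pos_of_pos hn0 _
  have hc2 : stepC n p ^ 2 = 1 / (4 * (n:ℝ) ^ (2/p : ℝ)) := by
    have h1 : ((n:ℝ) ^ (1/p : ℝ)) ^ (2:ℕ) = (n:ℝ) ^ (2/p : ℝ) := by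
      rw [← Real.rpow_natCast ((n:ℝ) ^ (1/p : ℝ)) 2, ← Real.rpow_mul hn0.le]
      congr 1
      push_cast
      ring
    have h2 : stepC n p ^ 2 = 1 / (4 * ((n:ℝ) ^ (1/p : ℝ)) ^ (2:ℕ)) := by
      unfold stepC
      have hnp : (0:ℝ) < (n:ℝ) ^ (1/p : ℝ) := Real.rpow_pos_of_pos hn0 _
      field_simp
      ring
    rw [h2, h1]
  set δ : ℝ := min (1/4 * stepC n p ^ 2) (1/16) with hδ
  -- Hessian diagonal lower bound
  have hHdiag : ∀ (x : Fin n → ℝ) (j : Fin n), pnorm p x < 1 → x j = 0 → 1 ≤ H x j j := by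
    intro x j hx hxj
    by_contra hlt
    push_neg at hlt
    set q' : ℝ := max (H x j j) 0 with hq'
    have hq'0 : 0 ≤ q' := le_max_right _ _
    have hq'1 : q' < 1 := max_lt hlt one_pos
    set t : ℝ := Real.sqrt (2 / (1 + q')) with ht
    have hden : (0:ℝ) < 1 + q' := by linarith
    have ht2 : t ^ 2 = 2 / (1 + q') := Real.sq_sqrt (by positivity)
    have ht1 : 1 < t := by
      rw [ht]
      have : (1:ℝ) < 2 / (1 + q') := by
        rw [lt_div_iff₀ hden]; linarith
      nlinarith [Real.sq_sqrt (by positivity : (0:ℝ) ≤ 2/(1+q')),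
        Real.sqrt_nonneg (2/(1+q'))]
    set h : Fin n → ℝ := Pi.single j t with hh
    have hform : h ⬝ᵥ (H x).mulVec h = t * (H x j j * t) := by
      rw [hh, Matrix.mulVec_single, single_dotProduct]
      simp [Matrix.col_apply, mul_comm]
    have hlt1 : h ⬝ᵥ (H x).mulVec h < 1 := by
      rw [hform]
      have h1 : t * (H x j j * t) ≤ t ^ 2 * q' := by
        have := le_max_left (H x j j) 0
        nlinarith [sq_nonneg t]
      have h2 : t ^ 2 * q' < 1 := by
        rw [ht2, div_mul_eq_mul_div, div_lt_iff₀ hden]; linarith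
      linarith
    have hsq : Real.sqrt (h ⬝ᵥ (H x).mulVec h) < 1 := by
      rcases le_or_gt (h ⬝ᵥ (H x).mulVec h) 0 with hle | hpos
      · calc Real.sqrt (h ⬝ᵥ (H x).mulVec h) = 0 := Real.sqrt_eq_zero_of_nonpos hle
          _ < 1 := one_pos
      · rw [show (1:ℝ) = Real.sqrt 1 by simp]
        exact Real.sqrt_lt_sqrt hpos.le hlt1
    have hin := hDikin x h hx hsq
    -- but pnorm p (x + h) > 1
    have hcoord : (x + h) j = t := by simp [hh, hxj]
    have hgt : 1 < pnorm p (x + h) := by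
      have hterm : (1:ℝ) < |(x + h) j| ^ p := by
        rw [hcoord, abs_of_pos (by linarith : (0:ℝ) < t)]
        calc (1:ℝ) = 1 ^ p := (Real.one_rpow p).symm
          _ < t ^ p := Real.rpow_lt_rpow (by norm_num) ht1 hp0
      have hsum : (1:ℝ) < ∑ i, |(x + h) i| ^ p := by
        calc (1:ℝ) < |(x + h) j| ^ p := hterm
          _ ≤ ∑ i, |(x + h) i| ^ p :=
            Finset.single_le_sum (fun i _ => Real.rpow_nonneg (abs_nonneg _) _)
              (Finset.mem_univ j)
      unfold pnorm
      calc (1:ℝ) = 1 ^ (1/p : ℝ) := (Real.one_rpow _).symm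
        _ < (∑ i, |(x + h) i| ^ p) ^ (1/p : ℝ) :=
          Real.rpow_lt_rpow (by norm_num) hsum (by positivity)
    linarith
  -- pairing inequality
  have hpair : ∀ (x : Fin n → ℝ) (j : Fin n) (s : ℝ), pnorm p x < 1 → x j = 0 →
      s ^ 2 = 1 →
      2 * Φ x + 2 * δ ≤ Φ (x + Pi.single j (s * stepC n p)) +
        Φ (x + -Pi.single j (s * stepC n p)) := by
    intro x j s hx hxj hs2
    set h : Fin n → ℝ := Pi.single j (s * stepC n p) with hh
    have hform : h ⬝ᵥ (H x).mulVec h = (s * stepC n p) * (H x j j * (s * stepC n p)) := by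
      rw [hh, Matrix.mulVec_single, single_dotProduct]
      simp [Matrix.col_apply, mul_comm]
    have hjj := hHdiag x j hx hxj
    have hqq : stepC n p ^ 2 ≤ h ⬝ᵥ (H x).mulVec h := by
      rw [hform]
      have heq : (s * stepC n p) * (H x j j * (s * stepC n p))
          = s ^ 2 * (stepC n p ^ 2 * H x j j) := by ring
      rw [heq, hs2, one_mul]
      nlinarith [sq_nonneg (stepC n p)]
    have hneg : (-h) ⬝ᵥ (H x).mulVec (-h) = h ⬝ᵥ (H x).mulVec h := by
      rw [Matrix.mulVec_neg, dotProduct_neg, neg_dotProduct, neg_neg]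
    have hδle : δ ≤ min ((1/4) * (h ⬝ᵥ (H x).mulVec h)) (1/16) := by
      rw [hδ]
      exact min_le_min (by linarith) le_rfl
    have hδle' : δ ≤ min ((1/4) * ((-h) ⬝ᵥ (H x).mulVec (-h))) (1/16) := by
      rw [hneg]; exact hδle
    have B1 := hBreg x h hx
    have B2 := hBreg x (-h) hx
    rw [dotProduct_neg] at B2
    have m1 : min ((1/4) * (h ⬝ᵥ (H x).mulVec h)) (1/16)
        ≤ Φ (x + h) - Φ x - gΦ x ⬝ᵥ h := B1
    have m2 : min ((1/4) * ((-h) ⬝ᵥ (H x).mulVec (-h))) (1/16)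
        ≤ Φ (x + -h) - Φ x + gΦ x ⬝ᵥ h := by linarith [B2]
    linarith
  -- decomposition of walkW
  have fb : ∀ (k : ℕ) (hk : k < n) (ξ : Fin n → Bool),
      walkW n p (k+1) ξ = walkW n p k ξ +
        Pi.single (⟨k, hk⟩ : Fin n) (sgn (ξ ⟨k, hk⟩) * stepC n p) := by
    intro k hk ξ
    funext i
    by_cases hij : i = (⟨k, hk⟩ : Fin n)
    · subst hij
      simp [walkW, Pi.single_eq_same]
    · have hvi : (i:ℕ) ≠ k := fun hv => hij (Fin.ext hv)
      simp only [walkW, Pi.add_apply, Pi.single_eq_of_ne hij, add_zero]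
      simp only [show ((i:ℕ) < k + 1) = ((i:ℕ) < k) from propext (by omega)]
  -- key martingale step
  have key : ∀ k, k < n →
      (∑ ξ : Fin n → Bool, Φ (walkW n p k ξ)) + 2^n * δ
        ≤ ∑ ξ : Fin n → Bool, Φ (walkW n p (k+1) ξ) := by
    intro k hk
    set j : Fin n := ⟨k, hk⟩ with hj
    set f : (Fin n → Bool) → (Fin n → Bool) := fun ξ => Function.update ξ j (!ξ j) with hf
    have hfj : ∀ ξ, f ξ j = !ξ j := by intro ξ; simp [hf]
    have hfne : ∀ (ξ : Fin n → Bool) (i : Fin n), i ≠ j → f ξ i = ξ i := by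
      intro ξ i hi; simp [hf, Function.update_of_ne hi]
    have hinv : Function.Involutive f := by
      intro ξ
      funext i
      by_cases hij : i = j
      · subst hij; simp [hf]
      · simp [hf, Function.update_of_ne hij]
    have fa : ∀ ξ, walkW n p k (f ξ) = walkW n p k ξ := by
      intro ξ
      funext i
      unfold walkW
      by_cases hik : (i:ℕ) < k
      · have hij : i ≠ j := by
          intro hv; rw [hv] at hik; simp [hj] at hik
        simp [hik, hfne ξ i hij]
      · simp [hik]
    have fc : ∀ ξ, walkW n p (k+1) (f ξ)
        = walkW n p k ξ + -Pi.single j (sgn (ξ j) * stepC n p) := by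
      intro ξ
      rw [fb k hk (f ξ), fa]
      congr 1
      rw [show (⟨k, hk⟩ : Fin n) = j from rfl, hfj]
      have : sgn (!ξ j) = -sgn (ξ j) := by cases ξ j <;> simp [sgn]
      rw [this, neg_mul, ← Pi.single_neg]
    have hsum2 : ∑ ξ : Fin n → Bool, Φ (walkW n p (k+1) (f ξ))
        = ∑ ξ : Fin n → Bool, Φ (walkW n p (k+1) ξ) :=
      Fintype.sum_bijective f hinv.bijective _ _ (fun ξ => rfl)
    have hper : ∀ ξ : Fin n → Bool,
        2 * Φ (walkW n p k ξ) + 2 * δ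
          ≤ Φ (walkW n p (k+1) ξ) + Φ (walkW n p (k+1) (f ξ)) := by
      intro ξ
      have hx : pnorm p (walkW n p k ξ) < 1 :=
        lt_of_le_of_lt (pnorm_walkW_le hn hp0 k ξ) (by norm_num)
      have hxj : walkW n p k ξ j = 0 := by simp [walkW, hj]
      rw [fb k hk ξ, fc ξ]
      exact hpair _ j (sgn (ξ j)) hx hxj (by cases hb : ξ j <;> simp [sgn, hb])
    have hcard : (Finset.univ : Finset (Fin n → Bool)).card = 2 ^ n := by
      simp [Finset.card_univ]
    have h3 : ∑ ξ : Fin n → Bool, (2 * Φ (walkW n p k ξ) + 2 * δ)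
        ≤ ∑ ξ : Fin n → Bool, (Φ (walkW n p (k+1) ξ) + Φ (walkW n p (k+1) (f ξ))) :=
      Finset.sum_le_sum fun ξ _ => hper ξ
    simp only [Finset.sum_add_distrib] at h3
    rw [hsum2, ← Finset.mul_sum, Finset.sum_const, hcard, nsmul_eq_mul] at h3
    push_cast at h3
    linarith
  -- induction
  have hmain : ∀ k, k ≤ n →
      (2:ℝ)^n * Φ 0 + k * (2^n * δ) ≤ ∑ ξ : Fin n → Bool, Φ (walkW n p k ξ) := by
    intro k
    induction k with
    | zero =>
      intro _
      have hW0 : ∀ ξ : Fin n → Bool, walkW n p 0 ξ = (0 : Fin n → ℝ) := by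
        intro ξ; funext i; simp [walkW]
      have : ∑ ξ : Fin n → Bool, Φ (walkW n p 0 ξ) = (2:ℝ)^n * Φ 0 := by
        simp only [hW0]
        rw [Finset.sum_const, Finset.card_univ]
        simp [nsmul_eq_mul]
      rw [this]
      simp
    | succ m ih =>
      intro hm
      have h1 := ih (by omega)
      have h2 := key m (by omega)
      push_cast
      push_cast at h1
      linarith
  have hSn := hmain n le_rfl
  have hend : ∑ ξ : Fin n → Bool, Φ (walkW n p n ξ)
      = ∑ ξ : Fin n → Bool, Φ (walkEnd n p ξ) := by
    apply Finset.sum_congr rfl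
    intro ξ _
    rw [walkW_n_eq]
  rw [hend] at hSn
  have h2n : (0:ℝ) < 2 ^ n := by positivity
  -- δ' bound
  set δ' : ℝ := min (1 / (64 * (n:ℝ) ^ (2/p : ℝ))) (1/16) with hδ'
  have hδδ' : δ' ≤ δ := by
    rw [hδ, hδ', hc2]
    apply min_le_min _ le_rfl
    rw [show (1:ℝ)/4 * (1/(4*(n:ℝ) ^ (2/p : ℝ))) = 1/(16*(n:ℝ) ^ (2/p : ℝ)) from by ring]
    exact one_div_le_one_div_of_le (by positivity) (by nlinarith)
  have hδ'0 : 0 ≤ δ' := le_min (by positivity) (by norm_num)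
  have partA : ((1 / 2 ^ n) * ∑ ξ : Fin n → Bool, Φ (walkEnd n p ξ)) - Φ 0
      ≥ n * δ' := by
    have hmul : (2:ℝ)^n * Φ 0 + n * (2^n * δ') ≤ ∑ ξ : Fin n → Bool, Φ (walkEnd n p ξ) := by
      have : (n:ℝ) * (2^n * δ') ≤ (n:ℝ) * (2^n * δ) := by
        apply mul_le_mul_of_nonneg_left _ hn0.le
        exact mul_le_mul_of_nonneg_left hδδ' h2n.le
      linarith
    have := mul_le_mul_of_nonneg_left hmul (by positivity : (0:ℝ) ≤ 1 / 2^n)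
    have heq : (1 / 2^n : ℝ) * ((2:ℝ)^n * Φ 0 + n * (2^n * δ'))
        = Φ 0 + n * δ' := by field_simp
    rw [heq] at this
    linarith
  refine ⟨partA, ?_⟩
  -- part B
  have hEle : ((1 / 2 ^ n) * ∑ ξ : Fin n → Bool, Φ (walkEnd n p ξ)) - Φ 0
      ≤ ν * Real.log 2 := by
    have hupper : ∀ ξ : Fin n → Bool, Φ (walkEnd n p ξ) ≤ Φ 0 + ν * Real.log 2 := by
      intro ξ
      have hpn : pnorm p (walkEnd n p ξ) ≤ 1 / 2 := by
        rw [← walkW_n_eq]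
        exact pnorm_walkW_le hn hp0 n ξ
      linarith [hNu (walkEnd n p ξ) hpn]
    have hsum : ∑ ξ : Fin n → Bool, Φ (walkEnd n p ξ)
        ≤ (2:ℝ)^n * (Φ 0 + ν * Real.log 2) := by
      calc ∑ ξ : Fin n → Bool, Φ (walkEnd n p ξ)
          ≤ ∑ _ξ : Fin n → Bool, (Φ 0 + ν * Real.log 2) :=
            Finset.sum_le_sum fun ξ _ => hupper ξ
        _ = (2:ℝ)^n * (Φ 0 + ν * Real.log 2) := by
            rw [Finset.sum_const, Finset.card_univ]
            simp only [Fintype.card_fun, Fintype.card_bool, Fintype.card_fin, nsmul_eq_mul]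
            push_cast
            ring
    have := mul_le_mul_of_nonneg_left hsum (by positivity : (0:ℝ) ≤ 1 / 2^n)
    have heq : (1 / 2^n : ℝ) * ((2:ℝ)^n * (Φ 0 + ν * Real.log 2))
        = Φ 0 + ν * Real.log 2 := by field_simp
    rw [heq] at this
    linarith
  have hlog : 0 < Real.log 2 := Real.log_pos (by norm_num)
  have hνlog : (n:ℝ) * δ' ≤ ν * Real.log 2 := le_trans partA hEle
  have hrn : (n:ℝ) ^ (1 - 2/p : ℝ) / 64 ≤ (n:ℝ) * δ' := by
    have hr : (n:ℝ) ^ (1 - 2/p : ℝ) = n / (n:ℝ) ^ (2/p : ℝ) := by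
      rw [Real.rpow_sub hn0, Real.rpow_one]
    rcases min_cases (1 / (64 * (n:ℝ) ^ (2/p : ℝ))) ((1:ℝ)/16) with ⟨hmin, _⟩ | ⟨hmin, _⟩ <;>
      rw [hδ', hmin]
    · apply le_of_eq
      rw [hr]
      ring
    · have h2p : (0:ℝ) < 2/p := by positivity
      have h1 : (n:ℝ) ^ (1 - 2/p : ℝ) ≤ (n:ℝ) := by
        calc (n:ℝ) ^ (1 - 2/p : ℝ) ≤ (n:ℝ) ^ (1:ℝ) :=
              Real.rpow_le_rpow_of_exponent_le (by exact_mod_cast hn) (by linarith)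
          _ = (n:ℝ) := Real.rpow_one _
      linarith
  rw [ge_iff_le, div_le_iff₀ (by positivity : (0:ℝ) < 64 * Real.log 2)]
  nlinarith
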